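/- Meyer–Floudas facet validity (Case III, first two facets): let 0 ≤ V̲_l ≤ V_l ≤ V̄_l, 0 ≤ V̲_m ≤ V_m ≤ V̄_m, and 0 ≤ s̲ ≤ S ≤ s̄. Then V_l V_m S ≥ V̲_m s̲ V_l + V̲_l s̲ V_m + V̲_l V̲_m S − 2 V̲_l V̲_m s̲ and V_l V_m S ≥ V̄_m s̄ V_l + V̄_l s̄ V_m + V̄_l V̄_m S − 2 V̄_l V̄_m s̄. -/
import Mathlib

theorem stmt18 (Vl Vm S Vll Vlu Vml Vmu sl su : ℝ)
    (hVl0 : 0 ≤ Vll) (hVl1 : Vll ≤ Vl) (hVl2 : Vl ≤ Vlu)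
    (hVm0 : 0 ≤ Vml) (hVm1 : Vml ≤ Vm) (hVm2 : Vm ≤ Vmu)
    (hs0 : 0 ≤ sl) (hS1 : sl ≤ S) (hS2 : S ≤ su) :
    Vl * Vm * S ≥ Vml * sl * Vl + Vll * sl * Vm + Vll * Vml * S - 2 * (Vll * Vml * sl) ∧
    Vl * Vm * S ≥ Vmu * su * Vl + Vlu * su * Vm + Vlu * Vmu * S - 2 * (Vlu * Vmu * su) := by
  constructor
  · nlinarith [mul_nonneg (mul_nonneg (sub_nonneg.2 hVl1) (sub_nonneg.2 hVm1)) (hs0.trans hS1),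
      mul_nonneg (mul_nonneg (sub_nonneg.2 hVl1) hVm0) (sub_nonneg.2 hS1),
      mul_nonneg (mul_nonneg hVl0 (sub_nonneg.2 hVm1)) (sub_nonneg.2 hS1)]
  · nlinarith [mul_nonneg (mul_nonneg (sub_nonneg.2 hVl2) (sub_nonneg.2 hVm2)) (hs0.trans hS1),
      mul_nonneg (mul_nonneg (sub_nonneg.2 hVl2) (hVm0.trans (hVm1.trans hVm2))) (sub_nonneg.2 hS2),
      mul_nonneg (mul_nonneg (hVl0.trans (hVl1.trans hVl2)) (sub_nonneg.2 hVm2)) (sub_nonneg.2 hS2)]
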